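/- (Deterministic walk in a random environment: positive probability of recurrence.) Identify the indices {1, 2, 3, 4} with the primitive directions g₁ = (1,0), g₂ = (0,1), g₃ = (−1,0), g₄ = (0,−1) of ℤ². For an environment λ : ℤ² → {1,2,3,4} and an initial direction index i₀ ∈ {1,2,3,4}, define the deterministic walk by p₀ = (0,0), d₀ = i₀, and for n ≥ 0: d_{n+1} = d_n + λ(p_n) mod 4 (with values taken in {1,2,3,4}) and p_{n+1} = p_n + g_{d_{n+1}}. Let π be a probability measure on {1,2,3,4} with π({4}) < 1, and let Π = π^{⊗ℤ²} be the product measure on environments. Then Π({λ : for every initial direction i₀ ∈ {1,2,3,4}, the walk in environment λ started at the origin with direction i₀ satisfies p_n = (0,0) for infinitely many n}) > 0. -/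

import Mathlib

open MeasureTheory Filter

/-- The four primitive directions `g₁ = E, g₂ = N, g₃ = W, g₄ = S` of `ℤ²`;
the direction index `i ∈ {1,2,3,4}` is encoded as `i - 1 : Fin 4`. -/
def dirG : Fin 4 → ℤ × ℤ := ![(1, 0), (0, 1), (-1, 0), (0, -1)]

/-- The deterministic walk in the environment `lam` started at the origin with
initial direction index `i0`: `p₀ = 0`, `d₀ = i0`, and `d_{n+1} = d_n + λ(p_n) mod 4`,
`p_{n+1} = p_n + g_{d_{n+1}}`.  A state `ω ∈ {1,2,3,4}` is encoded as
`ω - 1 : Fin 4`, so that the direction update reads `d_{n+1} = d_n + lam p_n + 1`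
in `Fin 4`.  (The states `1, 2, 3, 4`, i.e. `0, 1, 2, 3 : Fin 4`, correspond to
Left, Backward, Right, Forward.) -/
def walkDRE (lam : ℤ × ℤ → Fin 4) (i0 : Fin 4) : ℕ → (ℤ × ℤ) × Fin 4
  | 0 => ((0, 0), i0)
  | n + 1 =>
      let s := walkDRE lam i0 n
      let dnew : Fin 4 := s.2 + lam s.1 + 1
      (s.1 + dirG dnew, dnew)

def boxDRE : Finset (ℤ × ℤ) :=
  {(-1,-1),(-1,0),(-1,1),(0,-1),(0,0),(0,1),(1,-1),(1,0),(1,1)}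

lemma walkDRE_const_check : ∀ c : Fin 4, c ≠ 3 → ∀ i0 : Fin 4,
    (∀ k < 4, (walkDRE (fun _ => c) i0 k).1 ∈ boxDRE) ∧
    walkDRE (fun _ => c) i0 4 = ((0,0), i0) := by decide

def stepDRE (lam : ℤ × ℤ → Fin 4) (s : (ℤ × ℤ) × Fin 4) : (ℤ × ℤ) × Fin 4 :=
  (s.1 + dirG (s.2 + lam s.1 + 1), s.2 + lam s.1 + 1)

lemma walk_eq_iterate (lam : ℤ × ℤ → Fin 4) (i0 : Fin 4) (n : ℕ) :
    walkDRE lam i0 n = (stepDRE lam)^[n] ((0,0), i0) := by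
  induction n with
  | zero => rfl
  | succ n ih => rw [Function.iterate_succ_apply', ← ih]; rfl

lemma walk_congr (lam lam' : ℤ × ℤ → Fin 4) (i0 : Fin 4) (n : ℕ)
    (h : ∀ k < n, lam (walkDRE lam' i0 k).1 = lam' (walkDRE lam' i0 k).1) :
    walkDRE lam i0 n = walkDRE lam' i0 n := by
  induction n with
  | zero => rfl
  | succ n ih =>
      have h' : ∀ k < n, lam (walkDRE lam' i0 k).1 = lam' (walkDRE lam' i0 k).1 :=
        fun k hk => h k (Nat.lt_succ_of_lt hk)
      show walkDRE lam i0 (n+1) = walkDRE lam' i0 (n+1)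
      simp only [walkDRE, ih h', h n (Nat.lt_succ_self n)]

lemma walk_periodic (lam : ℤ × ℤ → Fin 4) (c : Fin 4) (hc : c ≠ 3)
    (hlam : ∀ γ ∈ boxDRE, lam γ = c) (i0 : Fin 4) (k : ℕ) :
    walkDRE lam i0 (4 * k) = ((0,0), i0) := by
  have h4 : walkDRE lam i0 4 = ((0,0), i0) := by
    have hcheck := walkDRE_const_check c hc i0
    have := walk_congr lam (fun _ => c) i0 4 (fun j hj => hlam _ (hcheck.1 j hj))
    rw [this, hcheck.2]
  have hstep : (stepDRE lam)^[4] ((0,0), i0) = ((0,0), i0) := by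
    rw [← walk_eq_iterate]; exact h4
  induction k with
  | zero => rfl
  | succ k ih =>
      rw [walk_eq_iterate] at ih ⊢
      rw [Nat.mul_succ, Function.iterate_add_apply, hstep, ih]

/-- **deterministic walk in a random environment: positive probability
of recurrence.** Let `π` be a probability measure on the states `{1,2,3,4}` (encoded
as `Fin 4`) giving the `Forward` state (encoded as `3 : Fin 4`) probability `< 1`, and
let `P = π^{⊗ℤ²}` be the product measure on environments (characterized by its values
on cylinder sets). Then with positive probability the environment is such that, for
every initial direction, the walk returns to the origin infinitely often. -/
theorem stmt12 (π : Measure (Fin 4)) [IsProbabilityMeasure π]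
    (hπ : π {3} < 1)
    (P : Measure ((ℤ × ℤ) → Fin 4)) [IsProbabilityMeasure P]
    (hP : ∀ (s : Finset (ℤ × ℤ)) (f : ℤ × ℤ → Set (Fin 4)),
      (∀ γ ∈ s, MeasurableSet (f γ)) →
      P {lam | ∀ γ ∈ s, lam γ ∈ f γ} = ∏ γ ∈ s, π (f γ)) :
    0 < P {lam | ∀ i0 : Fin 4,
      ∃ᶠ n in atTop, (walkDRE lam i0 n).1 = ((0 : ℤ), (0 : ℤ))} := by

  -- find a state c ≠ 3 with positive probability
  obtain ⟨c, hc3, hcpos⟩ : ∃ c : Fin 4, c ≠ 3 ∧ 0 < π {c} := by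
    by_contra h
    push_neg at h
    have h0 : π {(0 : Fin 4)} = 0 := le_antisymm (h 0 (by decide)) zero_le
    have h1 : π {(1 : Fin 4)} = 0 := le_antisymm (h 1 (by decide)) zero_le
    have h2 : π {(2 : Fin 4)} = 0 := le_antisymm (h 2 (by decide)) zero_le
    have huniv : (Set.univ : Set (Fin 4)) = {0} ∪ ({1} ∪ ({2} ∪ {3})) := by
      ext x; fin_cases x <;> simp
    have : (1 : ENNReal) ≤ π {3} := by
      have := measure_univ (μ := π)
      rw [huniv] at this
      calc (1 : ENNReal) = π ({0} ∪ ({1} ∪ ({2} ∪ {3}))) := this.symm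
        _ ≤ π {0} + (π {1} + (π {2} + π {3})) := by
            refine le_trans (measure_union_le _ _) ?_
            gcongr
            refine le_trans (measure_union_le _ _) ?_
            gcongr
            exact measure_union_le _ _
        _ = π {3} := by rw [h0, h1, h2]; simp
    exact absurd hπ (not_lt.mpr this)
  -- positive probability of the good event
  have hA : 0 < P {lam | ∀ γ ∈ boxDRE, lam γ ∈ ({c} : Set (Fin 4))} := by
    rw [hP boxDRE (fun _ => {c}) (fun _ _ => measurableSet_singleton c)]
    rw [Finset.prod_const]
    exact ENNReal.pow_pos hcpos _
  refine lt_of_lt_of_le hA (measure_mono ?_)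
  intro lam hlam i0
  rw [frequently_atTop]
  intro N
  refine ⟨4 * N, Nat.le_mul_of_pos_left N (by norm_num), ?_⟩
  rw [walk_periodic lam c hc3 (fun γ hγ => hlam γ hγ) i0 N]
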